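/- arXiv:2004.01280 — 2 statements merged into one kernel-verified Lean document; each statement's English description precedes it below -/
import Mathlib

section
/- Let a < b be real numbers and let u : ℝ → ℝ be continuously differentiable on [a,b] with u(a) = 0 and u(b) = 0. Then ∫_a^b u(x)² dx ≤ ((b−a)/π)² · ∫_a^b u′(x)² dx. -/
open Real intervalIntegral MeasureTheory Set

set_option maxHeartbeats 800000

/-- **Poincaré inequality on an interval with zero boundary values and optimal
constant `(b-a)/π`.**  If `u` is continuously differentiable on `[a, b]` with
`u a = 0` and `u b = 0`, then `∫_a^b u² ≤ ((b-a)/π)² ∫_a^b u'²`. -/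
theorem poincare_inequality_interval
    (a b : ℝ) (hab : a < b) (u u' : ℝ → ℝ)
    (hderiv : ∀ x ∈ Set.Icc a b, HasDerivWithinAt u (u' x) (Set.Icc a b) x)
    (hcont : ContinuousOn u' (Set.Icc a b))
    (ha : u a = 0) (hb : u b = 0) :
    ∫ x in a..b, (u x) ^ 2 ≤ ((b - a) / Real.pi) ^ 2 * ∫ x in a..b, (u' x) ^ 2 := by
  have hba : (0:ℝ) < b - a := sub_pos.2 hab
  set c : ℝ := Real.pi / (b - a) with hc_def
  have hc : 0 < c := div_pos Real.pi_pos hba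
  have hcb : c * (b - a) = Real.pi := div_mul_cancel₀ _ hba.ne'
  have hu_cont : ContinuousOn u (Set.Icc a b) := fun x hx => (hderiv x hx).continuousWithinAt
  -- bound on u'
  obtain ⟨M, hM⟩ : ∃ M, ∀ x ∈ Set.Icc a b, |u' x| ≤ M := by
    obtain ⟨M, hM⟩ := isCompact_Icc.exists_bound_of_continuousOn hcont
    exact ⟨M, fun x hx => by simpa using hM x hx⟩
  have hM0 : 0 ≤ M := le_trans (abs_nonneg _) (hM a ⟨le_refl a, hab.le⟩)
  -- bound on u
  obtain ⟨Ku, hKu⟩ : ∃ K, ∀ x ∈ Set.Icc a b, |u x| ≤ K := by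
    obtain ⟨K, hK⟩ := isCompact_Icc.exists_bound_of_continuousOn hu_cont
    exact ⟨K, fun x hx => by simpa using hK x hx⟩
  -- Lipschitz bound
  have hLip : ∀ x ∈ Set.Icc a b, ∀ y ∈ Set.Icc a b, |u y - u x| ≤ M * |y - x| := by
    intro x hx y hy
    have := (convex_Icc a b).norm_image_sub_le_of_norm_hasDerivWithin_le hderiv
      (fun z hz => by simpa using hM z hz) hx hy
    simpa using this
  set f : ℝ → ℝ := fun x => u' x ^ 2 - c ^ 2 * u x ^ 2 with hf_def
  have hf_cont : ContinuousOn f (Set.Icc a b) :=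
    (hcont.pow 2).sub (continuousOn_const.mul (hu_cont.pow 2))
  set B : ℝ := M ^ 2 + c ^ 2 * Ku ^ 2 with hB_def
  have hfB : ∀ x ∈ Set.Icc a b, |f x| ≤ B := by
    intro x hx
    have h1 : |u' x| ≤ M := hM x hx
    have h2 : |u x| ≤ Ku := hKu x hx
    have e1 : u' x ^ 2 ≤ M ^ 2 := by nlinarith [abs_nonneg (u' x), neg_abs_le (u' x), le_abs_self (u' x)]
    have e2 : u x ^ 2 ≤ Ku ^ 2 := by nlinarith [abs_nonneg (u x), neg_abs_le (u x), le_abs_self (u x)]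
    have : -B ≤ f x ∧ f x ≤ B := by
      constructor <;> simp only [hf_def, hB_def] <;> nlinarith [sq_nonneg (u' x), sq_nonneg (u x), sq_nonneg c, mul_nonneg (sq_nonneg c) (sq_nonneg (u x))]
    exact abs_le.2 this
  -- key estimate for each small ε
  have key : ∀ ε : ℝ, 0 < ε → ε < (b - a) / 2 →
      -((2 * B + 2 * M ^ 2) * ε) ≤ ∫ x in a..b, f x := by
    intro ε hε hε2
    set p : ℝ := a + ε with hp_def
    set q : ℝ := b - ε with hq_def
    have hpq : p ≤ q := by simp only [hp_def, hq_def]; linarith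
    have hap : a ≤ p := by simp only [hp_def]; linarith
    have hqb : q ≤ b := by simp only [hq_def]; linarith
    have hpI : p ∈ Set.Icc a b := ⟨hap, le_trans hpq hqb⟩
    have hqI : q ∈ Set.Icc a b := ⟨le_trans hap hpq, hqb⟩
    have hsub : Set.Icc p q ⊆ Set.Icc a b := Set.Icc_subset_Icc hap hqb
    have hce : 0 < c * ε := mul_pos hc hε
    have hce2 : c * ε < Real.pi / 2 := by
      have : c * ε < c * ((b - a) / 2) := by exact mul_lt_mul_of_pos_left hε2 hc
      calc c * ε < c * ((b - a) / 2) := this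
        _ = Real.pi / 2 := by rw [hc_def]; field_simp
    -- sin positivity on [p,q]
    have hsin : ∀ x ∈ Set.Icc p q, 0 < Real.sin (c * (x - a)) := by
      intro x hx
      apply Real.sin_pos_of_pos_of_lt_pi
      · have : c * ε ≤ c * (x - a) := by
          apply mul_le_mul_of_nonneg_left _ hc.le
          simp only [hp_def] at hx; linarith [hx.1]
        linarith
      · have : c * (x - a) ≤ c * (b - a - ε) := by
          apply mul_le_mul_of_nonneg_left _ hc.le
          simp only [hq_def] at hx; linarith [hx.2]
        have h2 : c * (b - a - ε) = Real.pi - c * ε := by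
          rw [mul_sub, hcb]
        linarith
    -- cotangent helper
    set ct : ℝ → ℝ := fun x => Real.cos (c * (x - a)) / Real.sin (c * (x - a)) with hct_def
    set G : ℝ → ℝ := fun x => c * (u x ^ 2 * ct x) with hG_def
    set sqf : ℝ → ℝ := fun x => (u' x - c * u x * ct x) ^ 2 with hsq_def
    -- derivative identity
    have hG_deriv : ∀ x ∈ Set.uIcc p q, HasDerivAt G (f x - sqf x) x := by
      intro x hx
      rw [Set.uIcc_of_le hpq] at hx
      have hxab : x ∈ Set.Ioo a b := ⟨lt_of_lt_of_le (by simp only [hp_def]; linarith) hx.1,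
        lt_of_le_of_lt hx.2 (by simp only [hq_def]; linarith)⟩
      have hu : HasDerivAt u (u' x) x :=
        (hderiv x (Set.Ioo_subset_Icc_self hxab)).hasDerivAt (Icc_mem_nhds hxab.1 hxab.2)
      have hs : Real.sin (c * (x - a)) ≠ 0 := (hsin x hx).ne'
      have hθ : HasDerivAt (fun y : ℝ => c * (y - a)) c x := by
        simpa using ((hasDerivAt_id x).sub_const a).const_mul c
      have hsinD : HasDerivAt (fun y => Real.sin (c * (y - a)))
          (Real.cos (c * (x - a)) * c) x := hθ.sin
      have hcosD : HasDerivAt (fun y => Real.cos (c * (y - a)))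
          (-Real.sin (c * (x - a)) * c) x := hθ.cos
      have hctD : HasDerivAt ct
          ((-Real.sin (c * (x - a)) * c * Real.sin (c * (x - a)) -
            Real.cos (c * (x - a)) * (Real.cos (c * (x - a)) * c)) /
            Real.sin (c * (x - a)) ^ 2) x := hcosD.div hsinD hs
      have hu2 : HasDerivAt (fun y => u y ^ 2) (2 * u x * u' x) x := by
        have h := hu.pow 2; simp at h; exact h
      have hGd : HasDerivAt G
          (c * ((2 * u x * u' x) * ct x + u x ^ 2 *
            ((-Real.sin (c * (x - a)) * c * Real.sin (c * (x - a)) -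
            Real.cos (c * (x - a)) * (Real.cos (c * (x - a)) * c)) /
            Real.sin (c * (x - a)) ^ 2))) x := (hu2.mul hctD).const_mul c
      convert hGd using 1
      have pyth : Real.sin (c * (x - a)) ^ 2 + Real.cos (c * (x - a)) ^ 2 = 1 :=
        Real.sin_sq_add_cos_sq _
      simp only [hf_def, hsq_def, hct_def]
      field_simp
      ring
    -- continuity of pieces on [p,q]
    have hct_cont : ContinuousOn ct (Set.Icc p q) := by
      have h1 : Continuous fun x : ℝ => c * (x - a) :=
        continuous_const.mul (continuous_id.sub continuous_const)
      exact ((Real.continuous_cos.comp h1).continuousOn).div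
        ((Real.continuous_sin.comp h1).continuousOn) (fun x hx => (hsin x hx).ne')
    have hsq_cont : ContinuousOn sqf (Set.Icc p q) :=
      (((hcont.mono hsub).sub ((continuousOn_const.mul (hu_cont.mono hsub)).mul hct_cont)).pow 2)
    have hf_int_pq : IntervalIntegrable f volume p q :=
      (hf_cont.mono (by rw [Set.uIcc_of_le hpq]; exact hsub)).intervalIntegrable
    have hsq_int : IntervalIntegrable sqf volume p q :=
      (hsq_cont.mono (by rw [Set.uIcc_of_le hpq])).intervalIntegrable
    have hftc : ∫ x in p..q, (f x - sqf x) = G q - G p := by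
      apply intervalIntegral.integral_eq_sub_of_hasDerivAt hG_deriv
      exact hf_int_pq.sub hsq_int
    have hmid : ∫ x in p..q, f x = (∫ x in p..q, sqf x) + (G q - G p) := by
      rw [← hftc, intervalIntegral.integral_sub hf_int_pq hsq_int]; ring
    -- boundary bound
    have hup : |u p| ≤ M * ε := by
      have := hLip a ⟨le_refl a, hab.le⟩ p hpI
      rw [ha] at this
      simpa [hp_def, abs_of_pos hε] using this
    have huq : |u q| ≤ M * ε := by
      have := hLip b ⟨hab.le, le_refl b⟩ q hqI
      rw [hb] at this
      have h2 : |q - b| = ε := by simp only [hq_def]; rw [abs_of_nonpos (by linarith)]; ring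
      simpa [h2] using this
    have hctp : ct p = Real.cos (c * ε) / Real.sin (c * ε) := by
      simp only [hct_def, hp_def]; ring_nf
    have hctq : ct q = -(Real.cos (c * ε) / Real.sin (c * ε)) := by
      have harg : c * (q - a) = Real.pi - c * ε := by
        simp only [hq_def]; rw [show b - ε - a = b - a - ε by ring, mul_sub, hcb]
      simp only [hct_def, harg, Real.cos_pi_sub, Real.sin_pi_sub, neg_div]
    have hsin_ce : 0 < Real.sin (c * ε) := Real.sin_pos_of_pos_of_lt_pi hce (by linarith [Real.pi_pos])
    have hcot_bound : Real.cos (c * ε) / Real.sin (c * ε) ≤ 1 / (c * ε) := by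
      have hcos_pos : 0 < Real.cos (c * ε) := Real.cos_pos_of_mem_Ioo ⟨by linarith [Real.pi_pos], hce2⟩
      have htan : c * ε < Real.tan (c * ε) := Real.lt_tan hce hce2
      rw [Real.tan_eq_sin_div_cos] at htan
      rw [div_le_div_iff₀ hsin_ce hce]
      calc Real.cos (c * ε) * (c * ε) ≤ Real.cos (c * ε) * (Real.sin (c * ε) / Real.cos (c * ε)) := by
            apply mul_le_mul_of_nonneg_left htan.le hcos_pos.le
        _ = Real.sin (c * ε) := by field_simp
        _ = 1 * Real.sin (c * ε) := by ring
    have hcot_nonneg : 0 ≤ Real.cos (c * ε) / Real.sin (c * ε) :=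
      div_nonneg (Real.cos_nonneg_of_mem_Icc ⟨by linarith [Real.pi_pos], hce2.le⟩) hsin_ce.le
    have hbd : -(2 * M ^ 2 * ε) ≤ G q - G p := by
      have hGq : G q = -(c * (u q ^ 2 * (Real.cos (c * ε) / Real.sin (c * ε)))) := by
        simp only [hG_def, hctq]; ring
      have hGp : G p = c * (u p ^ 2 * (Real.cos (c * ε) / Real.sin (c * ε))) := by
        simp only [hG_def, hctp]
      rw [hGq, hGp]
      have hup2 : u p ^ 2 ≤ (M * ε) ^ 2 := by nlinarith [abs_nonneg (u p), neg_abs_le (u p), le_abs_self (u p)]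
      have huq2 : u q ^ 2 ≤ (M * ε) ^ 2 := by nlinarith [abs_nonneg (u q), neg_abs_le (u q), le_abs_self (u q)]
      have h1 : c * (u p ^ 2 * (Real.cos (c * ε) / Real.sin (c * ε))) ≤ M ^ 2 * ε := by
        calc c * (u p ^ 2 * (Real.cos (c * ε) / Real.sin (c * ε)))
            ≤ c * ((M * ε) ^ 2 * (1 / (c * ε))) := by
              apply mul_le_mul_of_nonneg_left _ hc.le
              apply mul_le_mul hup2 hcot_bound hcot_nonneg (sq_nonneg _)
          _ = M ^ 2 * ε := by field_simp
      have h2 : c * (u q ^ 2 * (Real.cos (c * ε) / Real.sin (c * ε))) ≤ M ^ 2 * ε := by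
        calc c * (u q ^ 2 * (Real.cos (c * ε) / Real.sin (c * ε)))
            ≤ c * ((M * ε) ^ 2 * (1 / (c * ε))) := by
              apply mul_le_mul_of_nonneg_left _ hc.le
              apply mul_le_mul huq2 hcot_bound hcot_nonneg (sq_nonneg _)
          _ = M ^ 2 * ε := by field_simp
      linarith
    have hsq_nonneg : 0 ≤ ∫ x in p..q, sqf x :=
      intervalIntegral.integral_nonneg hpq (fun x _ => sq_nonneg _)
    have hmid_ge : -(2 * M ^ 2 * ε) ≤ ∫ x in p..q, f x := by
      rw [hmid]; linarith
    -- end pieces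
    have hf_int_ap : IntervalIntegrable f volume a p :=
      (hf_cont.mono (by rw [Set.uIcc_of_le hap]; exact Set.Icc_subset_Icc le_rfl hpI.2)).intervalIntegrable
    have hf_int_qb : IntervalIntegrable f volume q b :=
      (hf_cont.mono (by rw [Set.uIcc_of_le hqb]; exact Set.Icc_subset_Icc hqI.1 le_rfl)).intervalIntegrable
    have hend1 : |∫ x in a..p, f x| ≤ B * ε := by
      have := intervalIntegral.norm_integral_le_of_norm_le_const (a := a) (b := p) (f := f) (C := B)
        (fun x hx => by
          have hx' : x ∈ Set.Icc a b := by
            rw [Set.uIoc_of_le hap] at hx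
            exact ⟨hx.1.le, le_trans hx.2 hpI.2⟩
          rw [Real.norm_eq_abs]; exact hfB x hx')
      simpa [hp_def, abs_of_pos hε] using this
    have hend2 : |∫ x in q..b, f x| ≤ B * ε := by
      have := intervalIntegral.norm_integral_le_of_norm_le_const (a := q) (b := b) (f := f) (C := B)
        (fun x hx => by
          have hx' : x ∈ Set.Icc a b := by
            rw [Set.uIoc_of_le hqb] at hx
            exact ⟨le_trans hqI.1 hx.1.le, hx.2⟩
          rw [Real.norm_eq_abs]; exact hfB x hx')
      have h2 : |b - q| = ε := by simp only [hq_def]; rw [abs_of_nonneg (by linarith)]; ring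
      simpa [h2] using this
    have hsplit : ∫ x in a..b, f x = (∫ x in a..p, f x) + (∫ x in p..q, f x) + (∫ x in q..b, f x) := by
      rw [intervalIntegral.integral_add_adjacent_intervals hf_int_ap hf_int_pq,
        intervalIntegral.integral_add_adjacent_intervals (hf_int_ap.trans hf_int_pq) hf_int_qb]
    rw [hsplit]
    have e1 := abs_le.1 hend1
    have e2 := abs_le.1 hend2
    linarith [e1.1, e2.1, hmid_ge]
  -- conclude nonnegativity by limit
  have hkey0 : 0 ≤ ∫ x in a..b, f x := by
    by_contra h
    push_neg at h
    obtain ⟨X, hX⟩ : ∃ X, X = ∫ x in a..b, f x := ⟨_, rfl⟩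
    rw [← hX] at h
    obtain ⟨C, hC⟩ : ∃ C, C = 2 * B + 2 * M ^ 2 := ⟨_, rfl⟩
    have hB0 : 0 ≤ B := le_trans (abs_nonneg _) (hfB a ⟨le_refl a, hab.le⟩)
    have hC0 : 0 ≤ C := by rw [hC]; nlinarith
    obtain ⟨ε, hε⟩ : ∃ e : ℝ, e = min ((b - a) / 4) (-X / (2 * (C + 1))) := ⟨_, rfl⟩
    have hε1 : 0 < ε := by
      rw [hε]; exact lt_min (by linarith) (div_pos (neg_pos.2 h) (by linarith))
    have hε2 : ε < (b - a) / 2 := by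
      rw [hε]; exact lt_of_le_of_lt (min_le_left _ _) (by linarith)
    have hk := key ε hε1 hε2
    rw [← hX, ← hC] at hk
    have t1 : C * ε ≤ (C + 1) * (-X / (2 * (C + 1))) := by
      rw [hε]
      apply mul_le_mul (by linarith) (min_le_right _ _) (by rw [← hε]; exact hε1.le) (by linarith)
    have h3 : (C + 1) * (-X / (2 * (C + 1))) = -X / 2 := by field_simp
    rw [h3] at t1
    have t2 : -X ≤ C * ε := by linarith [hk]
    linarith [t1, t2, h]
  -- final algebra
  have hf_int : IntervalIntegrable f volume a b :=
    (hf_cont.mono (by rw [Set.uIcc_of_le hab.le])).intervalIntegrable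
  have hu2_int : IntervalIntegrable (fun x => u x ^ 2) volume a b :=
    ((hu_cont.pow 2).mono (by rw [Set.uIcc_of_le hab.le])).intervalIntegrable
  have hu'2_int : IntervalIntegrable (fun x => u' x ^ 2) volume a b :=
    ((hcont.pow 2).mono (by rw [Set.uIcc_of_le hab.le])).intervalIntegrable
  have hsplit2 : ∫ x in a..b, f x = (∫ x in a..b, u' x ^ 2) - c ^ 2 * ∫ x in a..b, u x ^ 2 := by
    simp only [hf_def]
    rw [intervalIntegral.integral_sub hu'2_int (hu2_int.const_mul (c ^ 2)),
      intervalIntegral.integral_const_mul]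
  rw [hsplit2] at hkey0
  have hcinv : ((b - a) / Real.pi) ^ 2 = 1 / c ^ 2 := by
    rw [hc_def]; field_simp
  rw [hcinv]
  have hc2 : 0 < c ^ 2 := by positivity
  rw [one_div, inv_mul_eq_div, le_div_iff₀ hc2]
  nlinarith [hkey0]
end

section
/- Let k ≥ 1 be an integer and set h = 1/k. Let u : ℝ → ℝ be continuously differentiable on [0,1] and suppose u(i·h) = 0 for every i ∈ {0, 1, …, k}. Then ∫_0^1 u(x)² dx ≤ (h/π)² · ∫_0^1 u′(x)² dx. -/
open Set Real MeasureTheory intervalIntegral Filter Topology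

lemma wirtinger (a b : ℝ) (hab : a < b) (u u' : ℝ → ℝ)
    (hderiv : ∀ x ∈ Set.Icc a b, HasDerivWithinAt u (u' x) (Set.Icc a b) x)
    (hcont : ContinuousOn u' (Set.Icc a b))
    (hua : u a = 0) (hub : u b = 0) :
    ∫ x in a..b, (u x) ^ 2 ≤ ((b - a) / Real.pi) ^ 2 * ∫ x in a..b, (u' x) ^ 2 := by
  set L : ℝ := b - a with hLdef
  have hL : 0 < L := sub_pos.2 hab
  set c : ℝ := Real.pi / L with hcdef
  have hc : 0 < c := div_pos Real.pi_pos hL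
  have hcL : c * L = Real.pi := div_mul_cancel₀ _ hL.ne'
  set φ : ℝ → ℝ := fun x => c * (Real.cos (c * (x - a)) / Real.sin (c * (x - a))) with hφdef
  set F : ℝ → ℝ := fun x => φ x * u x ^ 2 with hFdef
  -- continuity of u
  have hu_cont : ContinuousOn u (Set.Icc a b) := fun x hx => (hderiv x hx).continuousWithinAt
  -- bound on u'
  obtain ⟨M, hM⟩ := isCompact_Icc.exists_bound_of_continuousOn hcont
  have hM0 : 0 ≤ M := le_trans (norm_nonneg _) (hM a (Set.left_mem_Icc.2 hab.le))
  have hMVT : ∀ x ∈ Set.Icc a b, ∀ y ∈ Set.Icc a b, |u y - u x| ≤ M * |y - x| := by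
    intro x hx y hy
    simpa [Real.norm_eq_abs] using
      Convex.norm_image_sub_le_of_norm_hasDerivWithin_le hderiv hM (convex_Icc a b) hx hy
  -- integrability
  have hu2int : IntervalIntegrable (fun x => u x ^ 2) volume a b :=
    ((hu_cont.pow 2)).intervalIntegrable_of_Icc hab.le
  have hu'2int : IntervalIntegrable (fun x => u' x ^ 2) volume a b :=
    ((hcont.pow 2)).intervalIntegrable_of_Icc hab.le
  -- key inequality on interior subintervals
  have key : ∀ p q : ℝ, a < p → p ≤ q → q < b →
      c ^ 2 * ∫ x in p..q, u x ^ 2 ≤ (∫ x in a..b, u' x ^ 2) + |F p| + |F q| := by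
    intro p q hap hpq hqb
    have hsub : Set.Icc p q ⊆ Set.Ioo a b := fun x hx =>
      ⟨lt_of_lt_of_le hap hx.1, lt_of_le_of_lt hx.2 hqb⟩
    have hsubI : Set.Icc p q ⊆ Set.Icc a b := hsub.trans Set.Ioo_subset_Icc_self
    have hsin : ∀ x ∈ Set.Icc p q, 0 < Real.sin (c * (x - a)) := by
      intro x hx
      have h1 : 0 < c * (x - a) := mul_pos hc (sub_pos.2 (hsub hx).1)
      have h2 : c * (x - a) < Real.pi := by
        rw [← hcL]
        exact mul_lt_mul_of_pos_left (by simp [hLdef]; linarith [(hsub hx).2]) hc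
      exact Real.sin_pos_of_pos_of_lt_pi h1 h2
    have hUA : ∀ x ∈ Set.Icc p q, HasDerivAt u (u' x) x := by
      intro x hx
      exact (hderiv x (hsubI hx)).hasDerivAt (Icc_mem_nhds (hsub hx).1 (hsub hx).2)
    -- derivative of φ
    have hφd : ∀ x ∈ Set.Icc p q,
        HasDerivAt φ (-(c ^ 2) / Real.sin (c * (x - a)) ^ 2) x := by
      intro x hx
      have hlin : HasDerivAt (fun y : ℝ => c * (y - a)) (c * 1) x :=
        ((hasDerivAt_id x).sub_const a).const_mul c
      have hcos : HasDerivAt (fun y : ℝ => Real.cos (c * (y - a)))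
          (-Real.sin (c * (x - a)) * (c * 1)) x := (Real.hasDerivAt_cos _).comp x hlin
      have hsin' : HasDerivAt (fun y : ℝ => Real.sin (c * (y - a)))
          (Real.cos (c * (x - a)) * (c * 1)) x := (Real.hasDerivAt_sin _).comp x hlin
      have hd := (hcos.div hsin' (hsin x hx).ne').const_mul c
      refine hd.congr_deriv ?_
      have hs := (hsin x hx).ne'
      have pyth := Real.sin_sq_add_cos_sq (c * (x - a))
      set s := Real.sin (c * (x - a))
      set co := Real.cos (c * (x - a))
      field_simp
      linear_combination (-1) * pyth
    -- derivative of F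
    have hFd : ∀ x ∈ Set.Icc p q,
        HasDerivAt F (u' x ^ 2 - c ^ 2 * u x ^ 2 - (u' x - φ x * u x) ^ 2) x := by
      intro x hx
      have hd := (hφd x hx).mul ((hUA x hx).pow 2)
      refine hd.congr_deriv ?_
      have hs := (hsin x hx).ne'
      have pyth := Real.sin_sq_add_cos_sq (c * (x - a))
      simp only [hφdef]
      set s := Real.sin (c * (x - a))
      set co := Real.cos (c * (x - a))
      field_simp
      simp only [Pi.pow_apply, Nat.cast_ofNat, Nat.add_one_sub_one, pow_one]
      linear_combination (c^2*u x^2) * pyth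
    -- continuity on [p,q]
    have hφcont : ContinuousOn φ (Set.Icc p q) := by
      apply ContinuousOn.mul continuousOn_const
      exact ContinuousOn.div
        (Real.continuous_cos.comp (continuous_const.mul (continuous_id.sub continuous_const))).continuousOn
        (Real.continuous_sin.comp (continuous_const.mul (continuous_id.sub continuous_const))).continuousOn
        (fun x hx => (hsin x hx).ne')
    have hucont' : ContinuousOn u (Set.Icc p q) := hu_cont.mono hsubI
    have hu'cont' : ContinuousOn u' (Set.Icc p q) := hcont.mono hsubI
    have hFTC : ∫ x in p..q, (u' x ^ 2 - c ^ 2 * u x ^ 2 - (u' x - φ x * u x) ^ 2)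
        = F q - F p := by
      apply intervalIntegral.integral_eq_sub_of_hasDerivAt
      · intro x hx; exact hFd x (by rwa [Set.uIcc_of_le hpq] at hx)
      · exact (((hu'cont'.pow 2).sub (continuousOn_const.mul (hucont'.pow 2))).sub
          ((hu'cont'.sub (hφcont.mul hucont')).pow 2)).intervalIntegrable_of_Icc hpq
    have hi1 : IntervalIntegrable (fun x => u' x ^ 2) volume p q :=
      (hu'cont'.pow 2).intervalIntegrable_of_Icc hpq
    have hi2 : IntervalIntegrable (fun x => c ^ 2 * u x ^ 2) volume p q :=
      (continuousOn_const.mul (hucont'.pow 2)).intervalIntegrable_of_Icc hpq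
    have hi3 : IntervalIntegrable (fun x => (u' x - φ x * u x) ^ 2) volume p q :=
      ((hu'cont'.sub (hφcont.mul hucont')).pow 2).intervalIntegrable_of_Icc hpq
    rw [intervalIntegral.integral_sub (hi1.sub hi2) hi3,
      intervalIntegral.integral_sub hi1 hi2, intervalIntegral.integral_const_mul] at hFTC
    have h3 : 0 ≤ ∫ x in p..q, (u' x - φ x * u x) ^ 2 :=
      intervalIntegral.integral_nonneg hpq (fun x _ => sq_nonneg _)
    have h4 : (∫ x in p..q, u' x ^ 2) ≤ ∫ x in a..b, u' x ^ 2 :=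
      intervalIntegral.integral_mono_interval hap.le hpq hqb.le
        (Filter.Eventually.of_forall (fun x => sq_nonneg _)) hu'2int
    linarith [neg_abs_le (F q), le_abs_self (F p)]
  -- the primitive of u^2
  set Φ : ℝ → ℝ := fun x => ∫ t in a..x, u t ^ 2 with hΦdef
  have hΦcont : ContinuousOn Φ (Set.Icc a b) := by
    have h1 : IntegrableOn (fun t => u t ^ 2) (Set.uIcc a b) volume := by
      rw [Set.uIcc_of_le hab.le]; exact (hu_cont.pow 2).integrableOn_Icc
    have := intervalIntegral.continuousOn_primitive_interval h1
    rwa [Set.uIcc_of_le hab.le] at this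
  have hmapa : Tendsto (fun ε : ℝ => a + ε) (𝓝[>] (0:ℝ)) (𝓝[Set.Icc a b] a) := by
    rw [tendsto_nhdsWithin_iff]
    have hba : Tendsto (fun ε : ℝ => a + ε) (𝓝 (0:ℝ)) (𝓝 (a + 0)) :=
      tendsto_const_nhds.add tendsto_id
    refine ⟨by simpa using hba.mono_left nhdsWithin_le_nhds, ?_⟩
    filter_upwards [Ioc_mem_nhdsGT_of_mem ⟨le_refl (0:ℝ), hL⟩] with ε hε
    have h1 := hε.1; have h2 := hε.2
    constructor <;> simp only [hLdef] at h2 ⊢ <;> linarith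
  have hmapb : Tendsto (fun ε : ℝ => b - ε) (𝓝[>] (0:ℝ)) (𝓝[Set.Icc a b] b) := by
    rw [tendsto_nhdsWithin_iff]
    have hbb : Tendsto (fun ε : ℝ => b - ε) (𝓝 (0:ℝ)) (𝓝 (b - 0)) :=
      tendsto_const_nhds.sub tendsto_id
    refine ⟨by simpa using hbb.mono_left nhdsWithin_le_nhds, ?_⟩
    filter_upwards [Ioc_mem_nhdsGT_of_mem ⟨le_refl (0:ℝ), hL⟩] with ε hε
    have h1 := hε.1; have h2 := hε.2
    constructor <;> simp only [hLdef] at h2 ⊢ <;> linarith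
  have hΦa : Tendsto (fun ε : ℝ => Φ (a + ε)) (𝓝[>] (0:ℝ)) (𝓝 0) := by
    have h1 := (hΦcont a (Set.left_mem_Icc.2 hab.le)).tendsto.comp hmapa
    simpa [hΦdef, Function.comp_def] using h1
  have hΦb : Tendsto (fun ε : ℝ => Φ (b - ε)) (𝓝[>] (0:ℝ)) (𝓝 (∫ x in a..b, u x ^ 2)) := by
    have h1 := (hΦcont b (Set.right_mem_Icc.2 hab.le)).tendsto.comp hmapb
    simpa [hΦdef, Function.comp_def] using h1
  -- boundary terms tend to zero
  have hg0 : Tendsto (fun ε : ℝ => Real.pi / 2 * M ^ 2 * ε) (𝓝[>] (0:ℝ)) (𝓝 0) := by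
    have h1 : Tendsto (fun ε : ℝ => Real.pi / 2 * M ^ 2 * ε) (𝓝 (0:ℝ))
        (𝓝 (Real.pi / 2 * M ^ 2 * 0)) := tendsto_id.const_mul _
    simpa using h1.mono_left nhdsWithin_le_nhds
  have hFbound : ∀ ε ∈ Set.Ioc (0:ℝ) (L / 2), ∀ x : ℝ, x - a = ε ∨ x - a = L - ε →
      x ∈ Set.Icc a b → |F x| ≤ Real.pi / 2 * M ^ 2 * ε := by
    intro ε hε x hxa hxI
    have hε0 : 0 < ε := hε.1
    have hεL : ε ≤ L / 2 := hε.2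
    have hsinx : Real.sin (c * (x - a)) = Real.sin (c * ε) := by
      rcases hxa with h | h
      · rw [h]
      · rw [h, mul_sub, hcL, Real.sin_pi_sub]
    have hsl : 2 / Real.pi * (c * ε) ≤ Real.sin (c * ε) := by
      apply Real.mul_le_sin (by positivity)
      calc c * ε ≤ c * (L / 2) := by nlinarith
        _ = Real.pi / 2 := by rw [hcdef]; field_simp
    have hs0 : 0 < Real.sin (c * ε) := lt_of_lt_of_le (by positivity) hsl
    have hux : |u x| ≤ M * ε := by
      rcases hxa with h | h
      · have := hMVT a (Set.left_mem_Icc.2 hab.le) x hxI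
        rw [hua] at this
        simpa [show x - a = ε from h, abs_of_pos hε0] using this
      · have := hMVT b (Set.right_mem_Icc.2 hab.le) x hxI
        rw [hub] at this
        have hxb : x - b = -ε := by simp only [hLdef] at h; linarith
        simpa [hxb, abs_of_pos hε0] using this
    have e1 : |F x| = c * (|Real.cos (c * (x - a))| / Real.sin (c * ε)) * u x ^ 2 := by
      simp only [hFdef, hφdef]
      rw [abs_mul, abs_mul, abs_of_pos hc, hsinx, abs_div, abs_of_pos hs0, abs_pow, sq_abs]
    have e2 : u x ^ 2 ≤ (M * ε) ^ 2 := by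
      rw [← sq_abs]; exact pow_le_pow_left₀ (abs_nonneg _) hux 2
    have e3 : |F x| ≤ c * ((M * ε) ^ 2 / (2 / Real.pi * (c * ε))) := by
      rw [e1]
      calc c * (|Real.cos (c * (x - a))| / Real.sin (c * ε)) * u x ^ 2
          ≤ c * (1 / Real.sin (c * ε)) * (M * ε) ^ 2 := by
            refine mul_le_mul (mul_le_mul_of_nonneg_left ?_ hc.le) e2 (sq_nonneg _)
              (by positivity)
            exact (div_le_div_iff_of_pos_right hs0).mpr (Real.abs_cos_le_one _)
        _ = c * ((M * ε) ^ 2 / Real.sin (c * ε)) := by ring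
        _ ≤ c * ((M * ε) ^ 2 / (2 / Real.pi * (c * ε))) := by
            apply mul_le_mul_of_nonneg_left _ hc.le
            apply div_le_div_of_nonneg_left (sq_nonneg _) (by positivity) hsl
    calc |F x| ≤ c * ((M * ε) ^ 2 / (2 / Real.pi * (c * ε))) := e3
      _ = Real.pi / 2 * M ^ 2 * ε := by
          field_simp
  have hFa : Tendsto (fun ε : ℝ => |F (a + ε)|) (𝓝[>] (0:ℝ)) (𝓝 0) := by
    apply squeeze_zero' (Filter.Eventually.of_forall (fun ε => abs_nonneg _)) _ hg0
    filter_upwards [Ioc_mem_nhdsGT_of_mem ⟨le_refl (0:ℝ), half_pos hL⟩] with ε hε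
    refine hFbound ε hε (a + ε) (Or.inl (by ring)) ?_
    constructor <;> simp only [hLdef] at hε ⊢ <;> [linarith [hε.1]; linarith [hε.1, hε.2]]
  have hFb : Tendsto (fun ε : ℝ => |F (b - ε)|) (𝓝[>] (0:ℝ)) (𝓝 0) := by
    apply squeeze_zero' (Filter.Eventually.of_forall (fun ε => abs_nonneg _)) _ hg0
    filter_upwards [Ioc_mem_nhdsGT_of_mem ⟨le_refl (0:ℝ), half_pos hL⟩] with ε hε
    refine hFbound ε hε (b - ε) (Or.inr (by simp only [hLdef]; ring)) ?_
    constructor <;> simp only [hLdef] at hε ⊢ <;> [linarith [hε.1, hε.2]; linarith [hε.1]]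
  -- pass to the limit
  have hfinal : c ^ 2 * ∫ x in a..b, u x ^ 2 ≤ ∫ x in a..b, u' x ^ 2 := by
    have hLHS : Tendsto (fun ε : ℝ => c ^ 2 * (Φ (b - ε) - Φ (a + ε))) (𝓝[>] (0:ℝ))
        (𝓝 (c ^ 2 * ((∫ x in a..b, u x ^ 2) - 0))) := (hΦb.sub hΦa).const_mul _
    have hRHS : Tendsto (fun ε : ℝ => (∫ x in a..b, u' x ^ 2) + |F (a + ε)| + |F (b - ε)|)
        (𝓝[>] (0:ℝ)) (𝓝 ((∫ x in a..b, u' x ^ 2) + 0 + 0)) :=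
      (tendsto_const_nhds.add hFa).add hFb
    have hev : ∀ᶠ ε in 𝓝[>] (0:ℝ), c ^ 2 * (Φ (b - ε) - Φ (a + ε)) ≤
        (∫ x in a..b, u' x ^ 2) + |F (a + ε)| + |F (b - ε)| := by
      filter_upwards [Ioo_mem_nhdsGT_of_mem ⟨le_refl (0:ℝ), half_pos hL⟩] with ε hε
      have hε1 := hε.1
      have hε2 := hε.2
      have hord : a + ε ≤ b - ε := by simp only [hLdef] at hε2; linarith
      have hre : Φ (b - ε) - Φ (a + ε) = ∫ x in (a+ε)..(b-ε), u x ^ 2 := by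
        simp only [hΦdef]
        refine (intervalIntegral.integral_interval_sub_left (f := fun t => u t ^ 2) (μ := volume)
          (a := a) (b := b - ε) (c := a + ε) ?_ ?_)
        · exact hu2int.mono_set (by rw [Set.uIcc_of_le hab.le, Set.uIcc_of_le (by simp only [hLdef] at hε2 ⊢; linarith)]; exact Set.Icc_subset_Icc le_rfl (by simp only [hLdef] at hε2 ⊢; linarith))
        · exact hu2int.mono_set (by rw [Set.uIcc_of_le hab.le, Set.uIcc_of_le (by linarith)]; exact Set.Icc_subset_Icc le_rfl (by simp only [hLdef] at hε2 ⊢; linarith))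
      rw [hre]
      exact key (a + ε) (b - ε) (by linarith) hord (by linarith)
    have := le_of_tendsto_of_tendsto hLHS hRHS hev
    simpa using this
  have hc2 : (0:ℝ) < c ^ 2 := pow_pos hc 2
  calc ∫ x in a..b, u x ^ 2 = 1 / c ^ 2 * (c ^ 2 * ∫ x in a..b, u x ^ 2) := by
        field_simp
    _ ≤ 1 / c ^ 2 * ∫ x in a..b, u' x ^ 2 :=
        mul_le_mul_of_nonneg_left hfinal (by positivity)
    _ = (L / Real.pi) ^ 2 * ∫ x in a..b, u' x ^ 2 := by
        rw [hcdef]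
        rw [div_pow, div_pow, one_div_div]

/-- **Mesh Poincaré inequality.**  If `u` is continuously differentiable on `[0,1]`
and vanishes at all mesh nodes `i/k`, `i = 0, …, k`, then
`∫_0^1 u² ≤ (h/π)² ∫_0^1 u'²` where `h = 1/k`. -/
theorem poincare_inequality_mesh
    (k : ℕ) (hk : 1 ≤ k) (h : ℝ) (hh : h = 1 / k) (u u' : ℝ → ℝ)
    (hderiv : ∀ x ∈ Set.Icc (0 : ℝ) 1, HasDerivWithinAt u (u' x) (Set.Icc (0 : ℝ) 1) x)
    (hcont : ContinuousOn u' (Set.Icc (0 : ℝ) 1))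
    (hnodes : ∀ i : ℕ, i ≤ k → u (i * h) = 0) :
    ∫ x in (0 : ℝ)..1, (u x) ^ 2 ≤ (h / Real.pi) ^ 2 * ∫ x in (0 : ℝ)..1, (u' x) ^ 2 := by
  have hk0 : (0:ℝ) < k := by exact_mod_cast hk
  have hhpos : 0 < h := by rw [hh]; positivity
  have hkh : (k : ℝ) * h = 1 := by rw [hh]; field_simp
  set f : ℕ → ℝ := fun i => i * h with hfdef
  have hf0 : f 0 = 0 := by simp [hfdef]
  have hfk : f k = 1 := by simpa [hfdef] using hkh
  have hmono : ∀ i j : ℕ, i ≤ j → f i ≤ f j := fun i j hij => by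
    simp only [hfdef]
    exact mul_le_mul_of_nonneg_right (by exact_mod_cast hij) hhpos.le
  have hsub : ∀ i : ℕ, i < k → Set.Icc (f i) (f (i+1)) ⊆ Set.Icc (0:ℝ) 1 := by
    intro i hi
    refine Set.Icc_subset_Icc ?_ ?_
    · simpa [hf0] using hmono 0 i (Nat.zero_le i)
    · rw [← hfk]; exact hmono (i+1) k hi
  have hu_cont : ContinuousOn u (Set.Icc (0:ℝ) 1) := fun x hx => (hderiv x hx).continuousWithinAt
  have hint2 : ∀ i : ℕ, i < k → IntervalIntegrable (fun x => u x ^ 2) volume (f i) (f (i+1)) :=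
    fun i hi => ((hu_cont.mono (hsub i hi)).pow 2).intervalIntegrable_of_Icc
      (hmono i (i+1) (Nat.le_succ i))
  have hint2' : ∀ i : ℕ, i < k → IntervalIntegrable (fun x => u' x ^ 2) volume (f i) (f (i+1)) :=
    fun i hi => ((hcont.mono (hsub i hi)).pow 2).intervalIntegrable_of_Icc
      (hmono i (i+1) (Nat.le_succ i))
  have hsum2 : ∑ i ∈ Finset.range k, ∫ x in (f i)..(f (i+1)), u x ^ 2
      = ∫ x in (0:ℝ)..1, u x ^ 2 := by
    rw [← hf0, ← hfk]
    exact intervalIntegral.sum_integral_adjacent_intervals hint2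
  have hsum2' : ∑ i ∈ Finset.range k, ∫ x in (f i)..(f (i+1)), u' x ^ 2
      = ∫ x in (0:ℝ)..1, u' x ^ 2 := by
    rw [← hf0, ← hfk]
    exact intervalIntegral.sum_integral_adjacent_intervals hint2'
  have hterm : ∀ i : ℕ, i < k → (∫ x in (f i)..(f (i+1)), u x ^ 2)
      ≤ (h / Real.pi) ^ 2 * ∫ x in (f i)..(f (i+1)), u' x ^ 2 := by
    intro i hi
    have hab : f i < f (i+1) := by
      simp only [hfdef]
      have : (i:ℝ) < (i+1:ℕ) := by exact_mod_cast Nat.lt_succ_self i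
      nlinarith
    have hW := wirtinger (f i) (f (i+1)) hab u u'
      (fun x hx => (hderiv x ((hsub i hi) hx)).mono (hsub i hi))
      (hcont.mono (hsub i hi))
      (by simpa [hfdef] using hnodes i hi.le)
      (by simpa [hfdef] using hnodes (i+1) hi)
    have hdiff : f (i+1) - f i = h := by
      simp only [hfdef]; push_cast; ring
    rwa [hdiff] at hW
  calc ∫ x in (0:ℝ)..1, u x ^ 2
      = ∑ i ∈ Finset.range k, ∫ x in (f i)..(f (i+1)), u x ^ 2 := hsum2.symm
    _ ≤ ∑ i ∈ Finset.range k, (h / Real.pi) ^ 2 * ∫ x in (f i)..(f (i+1)), u' x ^ 2 :=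
        Finset.sum_le_sum (fun i hi => hterm i (Finset.mem_range.1 hi))
    _ = (h / Real.pi) ^ 2 * ∑ i ∈ Finset.range k, ∫ x in (f i)..(f (i+1)), u' x ^ 2 := by
        rw [Finset.mul_sum]
    _ = (h / Real.pi) ^ 2 * ∫ x in (0:ℝ)..1, u' x ^ 2 := by rw [hsum2']
end
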